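/- Let z_1, …, z_N be real numbers with 0 ≤ z_i ≤ Z_{i−1} for every i, where Z_{i−1} := max{1, Σ_{ℓ=1}^{i−1} z_ℓ}. Then for any subset K ⊆ {1, …, N}, Σ_{i∈K} z_i / √(Z_{i−1}) ≤ (√2 + 1) · √(Σ_{i∈K} z_i). -/

import Mathlib

lemma aux_sqrt_step (t v d : ℝ) (ht : 0 ≤ t) (hv : 0 ≤ v) (hdt : t ≤ d)
    (hdv : v ≤ d) (hd1 : 1 ≤ d) :
    v / Real.sqrt d ≤ (Real.sqrt 2 + 1) * (Real.sqrt (t + v) - Real.sqrt t) := by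
  have hd0 : 0 < d := lt_of_lt_of_le one_pos hd1
  have hsd : 0 < Real.sqrt d := Real.sqrt_pos.2 hd0
  have ha : Real.sqrt (t + v) ≤ Real.sqrt 2 * Real.sqrt d := by
    rw [← Real.sqrt_mul (by norm_num)]
    exact Real.sqrt_le_sqrt (by linarith)
  have hb : Real.sqrt t ≤ Real.sqrt d := Real.sqrt_le_sqrt hdt
  have h1 : Real.sqrt (t + v) + Real.sqrt t ≤ (Real.sqrt 2 + 1) * Real.sqrt d := by
    have : (Real.sqrt 2 + 1) * Real.sqrt d = Real.sqrt 2 * Real.sqrt d + Real.sqrt d := by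
      ring
    linarith
  have hmono : 0 ≤ Real.sqrt (t + v) - Real.sqrt t := by
    have := Real.sqrt_le_sqrt (show t ≤ t + v by linarith)
    linarith
  have e : (Real.sqrt (t + v) - Real.sqrt t) * (Real.sqrt (t + v) + Real.sqrt t) = v := by
    have h2 := Real.sq_sqrt (show (0:ℝ) ≤ t + v by linarith)
    have h3 := Real.sq_sqrt ht
    nlinarith [h2, h3]
  have hkey : v ≤ (Real.sqrt (t + v) - Real.sqrt t) * ((Real.sqrt 2 + 1) * Real.sqrt d) := by
    calc v = (Real.sqrt (t + v) - Real.sqrt t) * (Real.sqrt (t + v) + Real.sqrt t) := e.symm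
      _ ≤ _ := mul_le_mul_of_nonneg_left h1 hmono
  rw [div_le_iff₀ hsd]
  nlinarith [hkey]

/-- For a sequence `z_1, …, z_N` (here `z 0, …, z (N-1)`) with
`0 ≤ z_i ≤ Z_{i-1} := max{1, z_1 + ⋯ + z_{i-1}}`, and any subset `K` of the indices,
`∑_{i ∈ K} z_i / √(Z_{i-1}) ≤ (√2 + 1) √(∑_{i ∈ K} z_i)`. -/
theorem sum_div_sqrt_partial_sums_le
    (N : ℕ) (z : ℕ → ℝ)
    (hz : ∀ i < N, 0 ≤ z i ∧ z i ≤ max 1 (∑ ℓ ∈ Finset.range i, z ℓ))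
    (K : Finset ℕ) (hK : K ⊆ Finset.range N) :
    ∑ i ∈ K, z i / Real.sqrt (max 1 (∑ ℓ ∈ Finset.range i, z ℓ)) ≤
      (Real.sqrt 2 + 1) * Real.sqrt (∑ i ∈ K, z i) := by
  induction K using Finset.induction_on_max with
  | empty => simp
  | insert a s ha IH =>
    have haN : a < N := Finset.mem_range.1 (hK (Finset.mem_insert_self a s))
    have hsK : s ⊆ Finset.range N := fun x hx => hK (Finset.mem_insert_of_mem hx)
    have hanot : a ∉ s := fun h => lt_irrefl a (ha a h)
    rw [Finset.sum_insert hanot, Finset.sum_insert hanot]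
    have IH' := IH hsK
    set t := ∑ i ∈ s, z i with ht_def
    set v := z a with hv_def
    set d := max 1 (∑ ℓ ∈ Finset.range a, z ℓ) with hd_def
    have ht : 0 ≤ t := Finset.sum_nonneg fun i hi =>
      (hz i (Finset.mem_range.1 (hsK hi))).1
    have hv : 0 ≤ v := (hz a haN).1
    have hdv : v ≤ d := (hz a haN).2
    have hd1 : 1 ≤ d := le_max_left _ _
    have hdt : t ≤ d := by
      have hsub : s ⊆ Finset.range a := fun x hx => Finset.mem_range.2 (ha x hx)
      have h1 : t ≤ ∑ ℓ ∈ Finset.range a, z ℓ := by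
        apply Finset.sum_le_sum_of_subset_of_nonneg hsub
        intro i hi _
        exact (hz i (lt_trans (Finset.mem_range.1 hi) haN)).1
      exact le_trans h1 (le_max_right _ _)
    have hstep := aux_sqrt_step t v d ht hv hdt hdv hd1
    have hcomm : v + t = t + v := by ring
    calc v / Real.sqrt d + ∑ i ∈ s, z i / Real.sqrt (max 1 (∑ ℓ ∈ Finset.range i, z ℓ))
        ≤ (Real.sqrt 2 + 1) * (Real.sqrt (t + v) - Real.sqrt t)
            + (Real.sqrt 2 + 1) * Real.sqrt t := by linarith
      _ = (Real.sqrt 2 + 1) * Real.sqrt (v + t) := by rw [hcomm]; ring
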